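/- Let A, B be n×n Hermitian complex matrices such that A is positive semidefinite and B is definite on the kernel of A (i.e., either x*Bx > 0 for all nonzero x with Ax = 0, or x*Bx < 0 for all nonzero x with Ax = 0). Then there exist an invertible complex matrix U and real vectors α, β ∈ ℝⁿ such that U*AU = diag(α₁,…,αₙ), U*BU = diag(β₁,…,βₙ), with: αᵢ ≥ 0 for all i; (αᵢ, βᵢ) ≠ (0,0) for all i; the number of indices i with αᵢ = 0 equals the dimension of ker(A); the number of indices i with βᵢ > 0 (respectively βᵢ < 0, βᵢ = 0) equals the number of positive (respectively negative, zero) eigenvalues of B. -/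

import Mathlib

open Matrix
open scoped ComplexOrder

section AuxForSpectrum
open Finset

namespace SylAux

variable {n : ℕ}

noncomputable def quad (d : Fin n → ℝ) (x : Fin n → ℂ) : ℝ := ∑ i, d i * Complex.normSq (x i)

lemma quad_eq (d : Fin n → ℝ) (x : Fin n → ℂ) :
    star x ⬝ᵥ (Matrix.diagonal (fun i => (d i : ℂ))) *ᵥ x = (quad d x : ℂ) := by
  simp only [dotProduct, mulVec_diagonal, quad, Pi.star_apply, RCLike.star_def]
  push_cast
  refine Finset.sum_congr rfl fun i _ => ?_
  calc (starRingEnd ℂ) (x i) * ((d i : ℂ) * x i) = (d i : ℂ) * (x i * (starRingEnd ℂ) (x i)) := by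
        ring
    _ = (d i : ℂ) * (Complex.normSq (x i) : ℂ) := by rw [Complex.mul_conj]

noncomputable def coordSub (s : Set (Fin n)) : Submodule ℂ (Fin n → ℂ) where
  carrier := {x : Fin n → ℂ | ∀ j, j ∉ s → x j = 0}
  zero_mem' := fun j _ => rfl
  add_mem' := fun hx hy j hj => by simp [hx j hj, hy j hj]
  smul_mem' := fun c x hx j hj => by simp [hx j hj]

noncomputable def spanS (p : Fin n → Prop) [DecidablePred p] : Submodule ℂ (Fin n → ℂ) :=
  Submodule.span ℂ (Set.range fun i : {i // p i} => (Pi.single (i : Fin n) (1 : ℂ) : Fin n → ℂ))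

lemma li_single (p : Fin n → Prop) [DecidablePred p] :
    LinearIndependent ℂ (fun i : {i // p i} => (Pi.single (i : Fin n) (1 : ℂ) : Fin n → ℂ)) := by
  have h := ((Pi.basisFun ℂ (Fin n)).linearIndependent).comp
    (fun i : {i // p i} => (i : Fin n)) Subtype.val_injective
  have heq : (fun i : {i // p i} => (Pi.single (i : Fin n) (1 : ℂ) : Fin n → ℂ)) =
      (⇑(Pi.basisFun ℂ (Fin n)) ∘ fun i : {i // p i} => (i : Fin n)) := by
    funext i
    simp [Pi.basisFun_apply]
  rw [heq]
  exact h

lemma finrank_spanS (p : Fin n → Prop) [DecidablePred p] :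
    Module.finrank ℂ (spanS p) = (univ.filter p).card := by
  rw [spanS, finrank_span_eq_card (li_single p), Fintype.card_subtype]

lemma spanS_le (p : Fin n → Prop) [DecidablePred p] :
    spanS p ≤ coordSub {i | p i} := by
  rw [spanS, Submodule.span_le]
  rintro _ ⟨⟨i, hi⟩, rfl⟩ j hj
  exact Pi.single_eq_of_ne (fun h : j = i => hj (by rw [Set.mem_setOf_eq, h]; exact hi)) 1

lemma quad_pos {p : Fin n → Prop} [DecidablePred p] (hp : ∀ i, p i → 0 < (d : Fin n → ℝ) i)
    {x : Fin n → ℂ} (hx : x ∈ coordSub {i | p i}) (hx0 : x ≠ 0) : 0 < quad d x := by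
  obtain ⟨j0, hj0⟩ := Function.ne_iff.1 hx0
  have hj0p : p j0 := by by_contra h; exact hj0 (hx j0 h)
  refine Finset.sum_pos' (fun i _ => ?_) ⟨j0, Finset.mem_univ _, ?_⟩
  · by_cases hpi : p i
    · exact mul_nonneg (hp i hpi).le (Complex.normSq_nonneg _)
    · simp [hx i hpi]
  · exact mul_pos (hp _ hj0p) (by simpa [Complex.normSq_eq_zero] using hj0)

lemma quad_nonpos {p : Fin n → Prop} [DecidablePred p] (hp : ∀ i, p i → (d : Fin n → ℝ) i ≤ 0)
    {x : Fin n → ℂ} (hx : x ∈ coordSub {i | p i}) : quad d x ≤ 0 := by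
  refine Finset.sum_nonpos fun i _ => ?_
  by_cases hpi : p i
  · exact mul_nonpos_of_nonpos_of_nonneg (hp i hpi) (Complex.normSq_nonneg _)
  · simp [hx i hpi]

lemma sylvester_le (a b : Fin n → ℝ) (M : Matrix (Fin n) (Fin n) ℂ) (hM : IsUnit M)
    (h : ∀ x, quad a x = quad b (M *ᵥ x)) :
    (univ.filter fun i => 0 < a i).card ≤ (univ.filter fun i => 0 < b i).card := by
  by_contra hlt
  push_neg at hlt
  have hMinv : Invertible M := hM.invertible
  set e : (Fin n → ℂ) ≃ₗ[ℂ] (Fin n → ℂ) := M.toLinearEquiv' hMinv with he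
  set Sa := spanS (fun i => 0 < a i) with hSa
  set Tb := spanS (fun i => ¬ 0 < b i) with hTb
  set Tb' := Submodule.map (e.symm : (Fin n → ℂ) →ₗ[ℂ] (Fin n → ℂ)) Tb with hTb'
  have hdimSa : Module.finrank ℂ Sa = (univ.filter fun i => 0 < a i).card := finrank_spanS _
  have hdimTb' : Module.finrank ℂ Tb' = n - (univ.filter fun i => 0 < b i).card := by
    rw [hTb', LinearEquiv.finrank_map_eq, hTb, finrank_spanS]
    rw [Finset.filter_not, Finset.card_sdiff_of_subset (Finset.filter_subset _ _)]
    simp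
  have hb_le : (univ.filter fun i => 0 < b i).card ≤ n := by
    calc (univ.filter fun i => 0 < b i).card ≤ (univ : Finset (Fin n)).card :=
          Finset.card_filter_le _ _
      _ = n := by simp
  have hsup : Module.finrank ℂ (Sa ⊔ Tb' : Submodule ℂ (Fin n → ℂ)) ≤ n := by
    simpa using Submodule.finrank_le (Sa ⊔ Tb')
  have hinf : 0 < Module.finrank ℂ (Sa ⊓ Tb' : Submodule ℂ (Fin n → ℂ)) := by
    have := Submodule.finrank_sup_add_finrank_inf_eq Sa Tb'
    omega
  have hne : (Sa ⊓ Tb' : Submodule ℂ (Fin n → ℂ)) ≠ ⊥ := by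
    intro hbot
    rw [hbot] at hinf
    simp at hinf
  obtain ⟨x, hxmem, hx0⟩ := Submodule.exists_mem_ne_zero_of_ne_bot hne
  have hxa : x ∈ Sa := hxmem.1
  have hxb : e x ∈ Tb := by
    have := hxmem.2
    rw [hTb'] at this
    obtain ⟨y, hy, hyx⟩ := this
    rw [← hyx]
    simpa using hy
  have hex : e x = M *ᵥ x := by
    rw [he]
    rfl
  have h1 : 0 < quad a x := quad_pos (fun i hi => hi) (spanS_le _ hxa) hx0
  have h2 : quad b (M *ᵥ x) ≤ 0 := by
    rw [← hex]
    exact quad_nonpos (fun i hi => not_lt.1 hi) (spanS_le _ hxb)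
  rw [h x] at h1
  exact absurd h2 (not_le.2 h1)

end SylAux

namespace SylAux2
open SylAux

variable {n : ℕ}

lemma quad_congr {a b : Fin n → ℝ} {M : Matrix (Fin n) (Fin n) ℂ}
    (h : Matrix.diagonal (fun i => (a i : ℂ)) = Mᴴ * Matrix.diagonal (fun i => (b i : ℂ)) * M) :
    ∀ x, quad a x = quad b (M *ᵥ x) := by
  intro x
  have h1 : star x ⬝ᵥ (Matrix.diagonal fun i => (a i : ℂ)) *ᵥ x
      = star (M *ᵥ x) ⬝ᵥ (Matrix.diagonal fun i => (b i : ℂ)) *ᵥ (M *ᵥ x) := by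
    conv_rhs => rw [star_mulVec, ← dotProduct_mulVec, mulVec_mulVec, mulVec_mulVec]
    rw [h]
  rw [quad_eq, quad_eq] at h1
  exact_mod_cast h1

lemma card_pos_le {a b : Fin n → ℝ} {M : Matrix (Fin n) (Fin n) ℂ} (hM : IsUnit M)
    (h : Matrix.diagonal (fun i => (a i : ℂ)) = Mᴴ * Matrix.diagonal (fun i => (b i : ℂ)) * M) :
    (univ.filter fun i => 0 < a i).card ≤ (univ.filter fun i => 0 < b i).card :=
  sylvester_le a b M hM (quad_congr h)

lemma congr_symm {a b : Fin n → ℝ} {M : Matrix (Fin n) (Fin n) ℂ} (hM : IsUnit M)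
    (h : Matrix.diagonal (fun i => (a i : ℂ)) = Mᴴ * Matrix.diagonal (fun i => (b i : ℂ)) * M) :
    Matrix.diagonal (fun i => (b i : ℂ)) = (M⁻¹)ᴴ * Matrix.diagonal (fun i => (a i : ℂ)) * M⁻¹ := by
  have hd : IsUnit M.det := (Matrix.isUnit_iff_isUnit_det M).mp hM
  rw [h]
  rw [Matrix.conjTranspose_nonsing_inv]
  calc Matrix.diagonal (fun i => (b i : ℂ))
      = (Mᴴ⁻¹ * Mᴴ) * Matrix.diagonal (fun i => (b i : ℂ)) * (M * M⁻¹) := by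
        rw [Matrix.nonsing_inv_mul _ (by simpa using hd), Matrix.mul_nonsing_inv _ hd, one_mul,
          mul_one]
    _ = Mᴴ⁻¹ * (Mᴴ * Matrix.diagonal (fun i => (b i : ℂ)) * M) * M⁻¹ := by
        simp only [Matrix.mul_assoc]

lemma card_pos_eq {a b : Fin n → ℝ} {M : Matrix (Fin n) (Fin n) ℂ} (hM : IsUnit M)
    (h : Matrix.diagonal (fun i => (a i : ℂ)) = Mᴴ * Matrix.diagonal (fun i => (b i : ℂ)) * M) :
    (univ.filter fun i => 0 < a i).card = (univ.filter fun i => 0 < b i).card := by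
  refine le_antisymm (card_pos_le hM h) (card_pos_le ?_ (congr_symm hM h))
  have hd : IsUnit M.det := (Matrix.isUnit_iff_isUnit_det M).mp hM
  exact Matrix.isUnit_nonsing_inv_iff.mpr hM

lemma congr_neg {a b : Fin n → ℝ} {M : Matrix (Fin n) (Fin n) ℂ}
    (h : Matrix.diagonal (fun i => (a i : ℂ)) = Mᴴ * Matrix.diagonal (fun i => (b i : ℂ)) * M) :
    Matrix.diagonal (fun i => ((-a) i : ℂ)) = Mᴴ * Matrix.diagonal (fun i => ((-b) i : ℂ)) * M := by
  have h1 : (Matrix.diagonal (fun i => ((-a) i : ℂ))) = -(Matrix.diagonal fun i => (a i : ℂ)) := by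
    simp [← Matrix.diagonal_neg]
  have h2 : (Matrix.diagonal (fun i => ((-b) i : ℂ))) = -(Matrix.diagonal fun i => (b i : ℂ)) := by
    simp [← Matrix.diagonal_neg]
  rw [h1, h2, h]
  simp [Matrix.mul_neg, Matrix.neg_mul, ← Matrix.diagonal_neg]

lemma card_neg_eq {a b : Fin n → ℝ} {M : Matrix (Fin n) (Fin n) ℂ} (hM : IsUnit M)
    (h : Matrix.diagonal (fun i => (a i : ℂ)) = Mᴴ * Matrix.diagonal (fun i => (b i : ℂ)) * M) :
    (univ.filter fun i => a i < 0).card = (univ.filter fun i => b i < 0).card := by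
  have := card_pos_eq hM (congr_neg h)
  simpa [neg_pos] using this

lemma card_zero_aux (a : Fin n → ℝ) :
    (univ.filter fun i => a i = 0).card
      = n - ((univ.filter fun i => 0 < a i).card + (univ.filter fun i => a i < 0).card) := by
  have h1 : (univ.filter fun i => a i = 0).card + (univ.filter fun i => ¬ a i = 0).card = n := by
    rw [Finset.card_filter_add_card_filter_not]
    simp
  have h2 : (univ.filter fun i => ¬ a i = 0)
      = (univ.filter fun i => 0 < a i) ∪ (univ.filter fun i => a i < 0) := by
    rw [← Finset.filter_or]
    apply Finset.filter_congr
    intro i _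
    constructor
    · intro hne
      rcases lt_or_gt_of_ne hne with h | h
      · exact Or.inr h
      · exact Or.inl h
    · rintro (h | h) <;> simp [h.ne', h.ne]
  have h3 : Disjoint (univ.filter fun i => 0 < a i) (univ.filter fun i => a i < 0) := by
    rw [Finset.disjoint_filter]
    intro i _ hpos
    simp [not_lt, hpos.le]
  rw [h2, Finset.card_union_of_disjoint h3] at h1
  omega

lemma card_zero_eq {a b : Fin n → ℝ} {M : Matrix (Fin n) (Fin n) ℂ} (hM : IsUnit M)
    (h : Matrix.diagonal (fun i => (a i : ℂ)) = Mᴴ * Matrix.diagonal (fun i => (b i : ℂ)) * M) :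
    (univ.filter fun i => a i = 0).card = (univ.filter fun i => b i = 0).card := by
  rw [card_zero_aux a, card_zero_aux b, card_pos_eq hM h, card_neg_eq hM h]

end SylAux2

namespace MainAux
open SylAux SylAux2

lemma congr_dot {m : Type*} [Fintype m] (M C : Matrix m m ℂ) (x : m → ℂ) :
    star x ⬝ᵥ (Cᴴ * M * C) *ᵥ x = star (C *ᵥ x) ⬝ᵥ M *ᵥ (C *ᵥ x) := by
  conv_rhs => rw [star_mulVec, ← dotProduct_mulVec, mulVec_mulVec, mulVec_mulVec]

lemma spectral_conj {m : Type*} [Fintype m] [DecidableEq m] {M : Matrix m m ℂ}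
    (hM : M.IsHermitian) :
    (hM.eigenvectorUnitary : Matrix m m ℂ)ᴴ * M * hM.eigenvectorUnitary
      = diagonal (fun i => (hM.eigenvalues i : ℂ)) := by
  have h := hM.conjStarAlgAut_star_eigenvectorUnitary
  rw [Unitary.conjStarAlgAut_star_apply, Matrix.star_eq_conjTranspose] at h
  exact h

lemma unitary_isUnit {m : Type*} [Fintype m] [DecidableEq m] {M : Matrix m m ℂ}
    (hM : M.IsHermitian) : IsUnit (hM.eigenvectorUnitary : Matrix m m ℂ) :=
  (Matrix.isUnit_iff_isUnit_det _).mpr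
    (Matrix.isUnit_det_of_right_inverse ((Matrix.mem_unitaryGroup_iff).mp hM.eigenvectorUnitary.2))

lemma unitary_star_mul {m : Type*} [Fintype m] [DecidableEq m] {M : Matrix m m ℂ}
    (hM : M.IsHermitian) :
    (hM.eigenvectorUnitary : Matrix m m ℂ)ᴴ * hM.eigenvectorUnitary = 1 := by
  have := (Matrix.mem_unitaryGroup_iff').mp hM.eigenvectorUnitary.2
  rw [Matrix.star_eq_conjTranspose] at this
  exact this

lemma eig_ne_zero {m : Type*} [Fintype m] [DecidableEq m] {M : Matrix m m ℂ}
    (hM : M.IsHermitian) (hU : IsUnit M) (i : m) : hM.eigenvalues i ≠ 0 := by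
  have hd : M.det = ∏ i, (hM.eigenvalues i : ℂ) := hM.det_eq_prod_eigenvalues
  have h2 := (Matrix.isUnit_iff_isUnit_det M).mp hU
  rw [hd] at h2
  intro h0
  rw [Finset.prod_eq_zero (Finset.mem_univ i) (by rw [h0]; norm_num)] at h2
  simp at h2

lemma eigvec_ne_zero {m : Type*} [Fintype m] [DecidableEq m] [Nonempty m] {M : Matrix m m ℂ}
    (hM : M.IsHermitian) (i : m) : (⇑(hM.eigenvectorBasis i) : m → ℂ) ≠ 0 := by
  intro h0
  have hn := hM.eigenvectorBasis.orthonormal.1 i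
  rw [show hM.eigenvectorBasis i = 0 from (WithLp.ofLp_eq_zero 2).mp h0] at hn
  simp at hn

end MainAux

end AuxForSpectrum

open MainAux SylAux SylAux2

/-- Paper Theorem 4.8: for a Hermitian pair (A, B) with A positive semidefinite and
B definite on the kernel of A, there is a simultaneous diagonalization by congruence
with real diagonal entries whose signs encode the inertia of B and the kernel of A. -/
theorem spectrum_of_semidefinite_pair {n : ℕ} (A B : Matrix (Fin n) (Fin n) ℂ)
    (hA : A.PosSemidef) (hB : B.IsHermitian)
    (hdef : (∀ x : Fin n → ℂ, x ≠ 0 → A.mulVec x = 0 → 0 < (star x ⬝ᵥ B.mulVec x).re) ∨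
            (∀ x : Fin n → ℂ, x ≠ 0 → A.mulVec x = 0 → (star x ⬝ᵥ B.mulVec x).re < 0)) :
    ∃ (U : Matrix (Fin n) (Fin n) ℂ) (α β : Fin n → ℝ),
      IsUnit U ∧
      Uᴴ * A * U = Matrix.diagonal (fun i => (α i : ℂ)) ∧
      Uᴴ * B * U = Matrix.diagonal (fun i => (β i : ℂ)) ∧
      (∀ i, 0 ≤ α i) ∧
      (∀ i, (α i, β i) ≠ (0, 0)) ∧
      (Finset.univ.filter (fun i => α i = 0)).card =
        Module.finrank ℂ (LinearMap.ker A.mulVecLin) ∧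
      (Finset.univ.filter (fun i => 0 < β i)).card =
        (Finset.univ.filter (fun i => 0 < hB.eigenvalues i)).card ∧
      (Finset.univ.filter (fun i => β i < 0)).card =
        (Finset.univ.filter (fun i => hB.eigenvalues i < 0)).card ∧
      (Finset.univ.filter (fun i => β i = 0)).card =
        (Finset.univ.filter (fun i => hB.eigenvalues i = 0)).card := by
  have hAH : A.IsHermitian := hA.1
  set μ : Fin n → ℝ := hAH.eigenvalues with hμdef
  have hμ0 : ∀ i, 0 ≤ μ i := fun i => hA.eigenvalues_nonneg i
  set V : Matrix (Fin n) (Fin n) ℂ := (hAH.eigenvectorUnitary : Matrix (Fin n) (Fin n) ℂ) with hVdef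
  have hVA : Vᴴ * A * V = diagonal (fun i => (μ i : ℂ)) := spectral_conj hAH
  have hVunit : IsUnit V := unitary_isUnit hAH
  -- scaling
  set s : Fin n → ℝ := fun i => if μ i = 0 then 1 else (Real.sqrt (μ i))⁻¹ with hsdef
  have hs0 : ∀ i, s i ≠ 0 := by
    intro i
    by_cases h : μ i = 0
    · simp [hsdef, h]
    · have hpos : 0 < μ i := lt_of_le_of_ne (hμ0 i) (Ne.symm h)
      have hsq : Real.sqrt (μ i) ≠ 0 := (Real.sqrt_pos.mpr hpos).ne'
      simp [hsdef, h, hsq]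
  set Ds : Matrix (Fin n) (Fin n) ℂ := diagonal (fun i => (s i : ℂ)) with hDsdef
  have hDsH : Dsᴴ = Ds := by
    rw [hDsdef, diagonal_conjTranspose]
    exact congrArg Matrix.diagonal (funext fun i => by simp [Complex.conj_ofReal])
  have hDsunit : IsUnit Ds := by
    rw [Matrix.isUnit_iff_isUnit_det]
    apply Matrix.isUnit_det_of_right_inverse (B := diagonal fun i => ((s i : ℂ))⁻¹)
    rw [hDsdef, diagonal_mul_diagonal, ← diagonal_one]
    exact congrArg Matrix.diagonal
      (funext fun i => mul_inv_cancel₀ (by exact_mod_cast hs0 i))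
  set W : Matrix (Fin n) (Fin n) ℂ := V * Ds with hWdef
  have hWunit : IsUnit W := hVunit.mul hDsunit
  have hWdet : IsUnit W.det := (Matrix.isUnit_iff_isUnit_det W).mp hWunit
  set ε : Fin n → ℝ := fun i => if μ i = 0 then 0 else 1 with hεdef
  have hWA : Wᴴ * A * W = diagonal (fun i => (ε i : ℂ)) := by
    rw [hWdef, conjTranspose_mul, hDsH]
    calc Ds * Vᴴ * A * (V * Ds) = Ds * (Vᴴ * A * V) * Ds := by
          simp only [Matrix.mul_assoc]
      _ = Ds * diagonal (fun i => (μ i : ℂ)) * Ds := by rw [hVA]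
      _ = diagonal fun i => (ε i : ℂ) := by
          rw [hDsdef, diagonal_mul_diagonal, diagonal_mul_diagonal]
          refine congrArg Matrix.diagonal (funext fun i => ?_)
          have hreal : s i * μ i * s i = ε i := by
            by_cases h : μ i = 0
            · simp [hsdef, hεdef, h]
            · have hpos : 0 < μ i := lt_of_le_of_ne (hμ0 i) (Ne.symm h)
              have hsq : Real.sqrt (μ i) * Real.sqrt (μ i) = μ i := Real.mul_self_sqrt (hμ0 i)
              have hsne : Real.sqrt (μ i) ≠ 0 := (Real.sqrt_pos.mpr hpos).ne'
              simp only [hsdef, hεdef, if_neg h]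
              field_simp
              rw [Real.sq_sqrt (hμ0 i)]
          calc (s i : ℂ) * (μ i : ℂ) * (s i : ℂ) = ((s i * μ i * s i : ℝ) : ℂ) := by
                push_cast; ring
            _ = (ε i : ℂ) := by rw [hreal]
  -- kernel dimension
  have hkercard : (Finset.univ.filter fun i => μ i = 0).card
      = Module.finrank ℂ (LinearMap.ker A.mulVecLin) := by
    have hrank : A.rank = Fintype.card {i // μ i ≠ 0} := hAH.rank_eq_card_non_zero_eigs
    have h1 : A.rank + Module.finrank ℂ (LinearMap.ker A.mulVecLin) = n := by
      have h := LinearMap.finrank_range_add_finrank_ker A.mulVecLin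
      simpa [Matrix.rank] using h
    have h2 : Fintype.card {i // μ i ≠ 0} = (Finset.univ.filter fun i => μ i ≠ 0).card :=
      Fintype.card_subtype _
    have h3 : (Finset.univ.filter fun i => μ i = 0).card
        + (Finset.univ.filter fun i => ¬ μ i = 0).card = n := by
      rw [Finset.card_filter_add_card_filter_not]
      simp
    have h4 : (Finset.univ.filter fun i => ¬ μ i = 0).card
        = (Finset.univ.filter fun i => μ i ≠ 0).card := rfl
    omega
  classical
  set p : Fin n → Prop := fun i => ¬ μ i = 0 with hpdef
  set e := Equiv.sumCompl p with hedef
  set B₀ : Matrix (Fin n) (Fin n) ℂ := Wᴴ * B * W with hB₀def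
  have hB₀H : B₀.IsHermitian := Matrix.isHermitian_conjTranspose_mul_mul W hB
  set B' : Matrix ({i // p i} ⊕ {i // ¬ p i}) ({i // p i} ⊕ {i // ¬ p i}) ℂ
    := B₀.submatrix e e with hB'def
  have hB'H : B'.IsHermitian := hB₀H.submatrix e
  have hB'Heq : B'ᴴ = B' := hB'H
  set B22 := B'.toBlocks₂₂ with hB22def
  have hB22Heq : B22ᴴ = B22 := by
    ext k k'
    have h3 := congrFun (congrFun hB'Heq (Sum.inr k)) (Sum.inr k')
    simpa [hB22def, Matrix.toBlocks₂₂, Matrix.conjTranspose_apply] using h3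
  have hB22H : B22.IsHermitian := hB22Heq
  have hB21Heq : B'.toBlocks₂₁ᴴ = B'.toBlocks₁₂ := by
    ext i k
    have h3 := congrFun (congrFun hB'Heq (Sum.inl i)) (Sum.inr k)
    simpa [Matrix.toBlocks₂₁, Matrix.toBlocks₁₂, Matrix.conjTranspose_apply] using h3
  -- the quadratic form of B22 equals that of B on the kernel of A
  have hform : ∀ y : {i // ¬ p i} → ℂ, y ≠ 0 →
      ∃ x : Fin n → ℂ, x ≠ 0 ∧ A *ᵥ x = 0 ∧
        star y ⬝ᵥ B22 *ᵥ y = star x ⬝ᵥ B *ᵥ x := by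
    intro y hy
    set w : {i // p i} ⊕ {i // ¬ p i} → ℂ := Sum.elim 0 y with hwdef
    set z : Fin n → ℂ := w ∘ e.symm with hzdef
    have hze : ∀ σ, z (e σ) = w σ := by
      intro σ
      simp [hzdef, Function.comp]
    have h1 : star w ⬝ᵥ B' *ᵥ w = star z ⬝ᵥ B₀ *ᵥ z := by
      rw [hB'def, Matrix.submatrix_mulVec_equiv]
      refine Fintype.sum_equiv e _ _ fun σ => ?_
      simp only [Function.comp_apply, Pi.star_apply]
      rw [hze σ]
    have hsw : star w = Sum.elim (0 : {i // p i} → ℂ) (star y) := by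
      funext σ
      cases σ with
      | inl a => simp [hwdef]
      | inr a => simp [hwdef]
    have h2 : star w ⬝ᵥ B' *ᵥ w = star y ⬝ᵥ B22 *ᵥ y := by
      conv_lhs => rw [← Matrix.fromBlocks_toBlocks B', hwdef]
      rw [Matrix.fromBlocks_mulVec, hsw]
      have hcl : (Sum.elim (0 : {i // p i} → ℂ) y) ∘ Sum.inl = 0 := by
        funext a; simp
      have hcr : (Sum.elim (0 : {i // p i} → ℂ) y) ∘ Sum.inr = y := by
        funext a; simp
      rw [hcl, hcr, sumElim_dotProduct_sumElim]
      simp [hB22def, zero_dotProduct, Matrix.mulVec_zero]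
    have h3 : star z ⬝ᵥ B₀ *ᵥ z = star (W *ᵥ z) ⬝ᵥ B *ᵥ (W *ᵥ z) := by
      rw [hB₀def]
      exact congr_dot B W z
    have h4 : star z ⬝ᵥ (Wᴴ * A * W) *ᵥ z = 0 := by
      rw [hWA]
      rw [dotProduct]
      refine Finset.sum_eq_zero fun i _ => ?_
      by_cases h : μ i = 0
      · simp [Matrix.mulVec_diagonal, hεdef, h]
      · have hsymm : e.symm i = Sum.inl ⟨i, h⟩ := Equiv.sumCompl_symm_apply_of_pos (p := p) (a := i) h
        have hz0 : z i = 0 := by simp [hzdef, hwdef, hsymm]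
        simp [hz0]
    have h5 : star (W *ᵥ z) ⬝ᵥ A *ᵥ (W *ᵥ z) = 0 := by
      rw [← congr_dot A W z]
      exact h4
    have hA0 : A *ᵥ (W *ᵥ z) = 0 := (hA.dotProduct_mulVec_zero_iff _).mp h5
    have hzne : W *ᵥ z ≠ 0 := by
      intro hWz
      have hz0 : z = 0 := by
        have h6 : W⁻¹ *ᵥ (W *ᵥ z) = z := by
          rw [Matrix.mulVec_mulVec, Matrix.nonsing_inv_mul _ hWdet, Matrix.one_mulVec]
        rw [hWz, Matrix.mulVec_zero] at h6
        exact h6.symm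
      apply hy
      funext k
      have h7 : z (e (Sum.inr k)) = 0 := by rw [hz0]; rfl
      rw [hze (Sum.inr k)] at h7
      simpa [hwdef] using h7
    exact ⟨W *ᵥ z, hzne, hA0, by rw [← h2, h1, h3]⟩
  have hform22 : ∀ y : {i // ¬ p i} → ℂ, y ≠ 0 → (star y ⬝ᵥ B22 *ᵥ y).re ≠ 0 := by
    intro y hy
    obtain ⟨x, hx0, hAx, hxy⟩ := hform y hy
    rw [hxy]
    rcases hdef with h | h
    · exact (h x hx0 hAx).ne'
    · exact (h x hx0 hAx).ne
  -- B22 is invertible with nonzero eigenvalues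
  have heigK : ∀ k, hB22H.eigenvalues k ≠ 0 := by
    intro k
    have : Nonempty {i // ¬ p i} := ⟨k⟩
    have hv := eigvec_ne_zero hB22H k
    have he := hB22H.eigenvalues_eq k
    intro h0
    rw [h0] at he
    have h9 := hform22 _ hv
    exact h9 (by simpa using he.symm)
  have hB22unit : IsUnit B22 := by
    rw [Matrix.isUnit_iff_isUnit_det, hB22H.det_eq_prod_eigenvalues]
    apply isUnit_iff_ne_zero.mpr
    exact Finset.prod_ne_zero_iff.mpr fun k _ => Complex.ofReal_ne_zero.mpr (heigK k)
  have hB22det : IsUnit B22.det := (Matrix.isUnit_iff_isUnit_det B22).mp hB22unit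
  -- Schur complement elimination
  set X : Matrix {i // ¬ p i} {i // p i} ℂ := -(B22⁻¹ * B'.toBlocks₂₁) with hXdef
  set T : Matrix ({i // p i} ⊕ {i // ¬ p i}) ({i // p i} ⊕ {i // ¬ p i}) ℂ
    := Matrix.fromBlocks 1 0 X 1 with hTdef
  have hTunit : IsUnit T := by
    rw [Matrix.isUnit_iff_isUnit_det, hTdef, Matrix.det_fromBlocks_zero₁₂]
    simp
  have hTA : Tᴴ * Matrix.fromBlocks 1 0 0 0 * T = Matrix.fromBlocks 1 0 0 0 := by
    rw [hTdef, Matrix.fromBlocks_conjTranspose]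
    simp [Matrix.fromBlocks_multiply]
  set S : Matrix {i // p i} {i // p i} ℂ := B'.toBlocks₁₁ + B'.toBlocks₁₂ * X with hSdef
  have hTB : Tᴴ * B' * T = Matrix.fromBlocks S 0 0 B22 := by
    have e1 : B' * T = Matrix.fromBlocks S B'.toBlocks₁₂ 0 B22 := by
      conv_lhs => rw [← Matrix.fromBlocks_toBlocks B', hTdef]
      rw [Matrix.fromBlocks_multiply]
      have hzero : B'.toBlocks₂₁ + B'.toBlocks₂₂ * X = 0 := by
        rw [hXdef, Matrix.mul_neg, ← hB22def,
          Matrix.mul_nonsing_inv_cancel_left _ _ hB22det, add_neg_cancel]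
      simp only [Matrix.mul_one, Matrix.mul_zero, zero_add, add_zero]
      rw [← hB22def, hzero, ← hSdef]
    have hXH : Xᴴ * B22 = -B'.toBlocks₁₂ := by
      rw [hXdef, Matrix.conjTranspose_neg, Matrix.conjTranspose_mul,
        Matrix.conjTranspose_nonsing_inv, hB22Heq, hB21Heq, Matrix.neg_mul,
        Matrix.nonsing_inv_mul_cancel_right _ _ hB22det]
    rw [Matrix.mul_assoc, e1, hTdef, Matrix.fromBlocks_conjTranspose,
      Matrix.fromBlocks_multiply]
    simp only [Matrix.conjTranspose_one, Matrix.conjTranspose_zero, Matrix.one_mul,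
      Matrix.zero_mul, Matrix.mul_zero, add_zero, zero_add, hXH]
    simp
  have hSH : S.IsHermitian := by
    have h2 : (Matrix.fromBlocks S (0 : Matrix {i // p i} {i // ¬ p i} ℂ)
        (0 : Matrix {i // ¬ p i} {i // p i} ℂ) B22).IsHermitian := by
      rw [← hTB]
      exact Matrix.isHermitian_conjTranspose_mul_mul T hB'H
    have h2eq := h2.eq
    ext i j
    have h3 := congrFun (congrFun h2eq (Sum.inl i)) (Sum.inl j)
    simpa [Matrix.conjTranspose_apply] using h3
  -- diagonalize the two diagonal blocks by unitaries
  set US : Matrix {i // p i} {i // p i} ℂ := (hSH.eigenvectorUnitary : Matrix {i // p i} {i // p i} ℂ)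
    with hUSdef
  set UK : Matrix {i // ¬ p i} {i // ¬ p i} ℂ := (hB22H.eigenvectorUnitary : Matrix {i // ¬ p i} {i // ¬ p i} ℂ)
    with hUKdef
  have hUSunit : IsUnit US := unitary_isUnit hSH
  have hUKunit : IsUnit UK := unitary_isUnit hB22H
  have hUS1 : USᴴ * US = 1 := unitary_star_mul hSH
  have hUK1 : UKᴴ * UK = 1 := unitary_star_mul hB22H
  have hUSS : USᴴ * S * US = diagonal (fun k => (hSH.eigenvalues k : ℂ)) := spectral_conj hSH
  have hUKK : UKᴴ * B22 * UK = diagonal (fun k => (hB22H.eigenvalues k : ℂ)) :=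
    spectral_conj hB22H
  set G2 : Matrix ({i // p i} ⊕ {i // ¬ p i}) ({i // p i} ⊕ {i // ¬ p i}) ℂ
    := Matrix.fromBlocks US 0 0 UK with hG2def
  have hG2unit : IsUnit G2 := by
    rw [Matrix.isUnit_iff_isUnit_det, hG2def, Matrix.det_fromBlocks_zero₁₂]
    exact ((Matrix.isUnit_iff_isUnit_det US).mp hUSunit).mul
      ((Matrix.isUnit_iff_isUnit_det UK).mp hUKunit)
  have hG2A : G2ᴴ * Matrix.fromBlocks 1 0 0 0 * G2 = Matrix.fromBlocks 1 0 0 0 := by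
    rw [hG2def, Matrix.fromBlocks_conjTranspose]
    simp only [Matrix.fromBlocks_multiply, Matrix.conjTranspose_zero, Matrix.mul_one,
      Matrix.mul_zero, Matrix.zero_mul, Matrix.one_mul, add_zero, zero_add, hUS1]
  set dd : {i // p i} ⊕ {i // ¬ p i} → ℂ
    := Sum.elim (fun k => (hSH.eigenvalues k : ℂ)) (fun k => (hB22H.eigenvalues k : ℂ))
    with hdddef
  have hG2B : G2ᴴ * Matrix.fromBlocks S 0 0 B22 * G2 = diagonal dd := by
    rw [hG2def, Matrix.fromBlocks_conjTranspose]
    simp only [Matrix.fromBlocks_multiply, Matrix.conjTranspose_zero, Matrix.mul_one,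
      Matrix.mul_zero, Matrix.zero_mul, Matrix.one_mul, add_zero, zero_add]
    rw [hdddef, ← Matrix.fromBlocks_diagonal, ← hUSS, ← hUKK]
  -- assemble
  set G : Matrix ({i // p i} ⊕ {i // ¬ p i}) ({i // p i} ⊕ {i // ¬ p i}) ℂ := T * G2
    with hGdef
  have hGunit : IsUnit G := hTunit.mul hG2unit
  have hGA : Gᴴ * Matrix.fromBlocks 1 0 0 0 * G = Matrix.fromBlocks 1 0 0 0 := by
    rw [hGdef, Matrix.conjTranspose_mul]
    calc G2ᴴ * Tᴴ * Matrix.fromBlocks 1 0 0 0 * (T * G2)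
        = G2ᴴ * (Tᴴ * Matrix.fromBlocks 1 0 0 0 * T) * G2 := by
          simp only [Matrix.mul_assoc]
      _ = Matrix.fromBlocks 1 0 0 0 := by rw [hTA]; exact hG2A
  have hGB : Gᴴ * B' * G = diagonal dd := by
    rw [hGdef, Matrix.conjTranspose_mul]
    calc G2ᴴ * Tᴴ * B' * (T * G2) = G2ᴴ * (Tᴴ * B' * T) * G2 := by
          simp only [Matrix.mul_assoc]
      _ = diagonal dd := by rw [hTB]; exact hG2B
  set U : Matrix (Fin n) (Fin n) ℂ := W * (G.submatrix ⇑e.symm ⇑e.symm) with hUdef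
  have hsubunit : IsUnit (G.submatrix ⇑e.symm ⇑e.symm) := by
    rw [Matrix.isUnit_iff_isUnit_det, Matrix.det_submatrix_equiv_self e.symm]
    exact (Matrix.isUnit_iff_isUnit_det G).mp hGunit
  have hUunit : IsUnit U := hWunit.mul hsubunit
  -- the diagonal forms
  have hεblock : diagonal ((fun i => (ε i : ℂ)) ∘ ⇑e)
      = (Matrix.fromBlocks 1 0 0 0 :
          Matrix ({i // p i} ⊕ {i // ¬ p i}) ({i // p i} ⊕ {i // ¬ p i}) ℂ) := by
    have h1 : (fun i => (ε i : ℂ)) ∘ ⇑e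
        = Sum.elim (fun _ : {i // p i} => (1 : ℂ)) (fun _ : {i // ¬ p i} => 0) := by
      funext σ
      cases σ with
      | inl a =>
        have ha : ¬ μ a.1 = 0 := a.2
        simp [hεdef, hedef, ha]
      | inr a =>
        have ha : μ a.1 = 0 := not_not.mp a.2
        simp [hεdef, hedef, ha]
    rw [h1, ← Matrix.fromBlocks_diagonal]
    simp
  have hUA : Uᴴ * A * U = diagonal (fun i => (ε i : ℂ)) := by
    have hdiagsub : diagonal (fun i => (ε i : ℂ))
        = (diagonal ((fun i => (ε i : ℂ)) ∘ ⇑e)).submatrix ⇑e.symm ⇑e.symm := by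
      rw [Matrix.submatrix_diagonal_equiv]
      exact congrArg Matrix.diagonal (funext fun i => by simp)
    rw [hUdef, Matrix.conjTranspose_mul]
    calc (G.submatrix ⇑e.symm ⇑e.symm)ᴴ * Wᴴ * A * (W * G.submatrix ⇑e.symm ⇑e.symm)
        = (G.submatrix ⇑e.symm ⇑e.symm)ᴴ * (Wᴴ * A * W) * G.submatrix ⇑e.symm ⇑e.symm := by
          simp only [Matrix.mul_assoc]
      _ = (G.submatrix ⇑e.symm ⇑e.symm)ᴴ * diagonal (fun i => (ε i : ℂ))
            * G.submatrix ⇑e.symm ⇑e.symm := by rw [hWA]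
      _ = (Gᴴ * diagonal ((fun i => (ε i : ℂ)) ∘ ⇑e) * G).submatrix ⇑e.symm ⇑e.symm := by
          rw [hdiagsub, Matrix.conjTranspose_submatrix, Matrix.submatrix_mul_equiv,
            Matrix.submatrix_mul_equiv]
      _ = diagonal (fun i => (ε i : ℂ)) := by
          rw [hεblock, hGA, ← hεblock, ← hdiagsub]
  set β : Fin n → ℝ
    := fun i => Sum.elim hSH.eigenvalues hB22H.eigenvalues (e.symm i) with hβdef
  have hβe : (fun i => (β i : ℂ)) ∘ ⇑e = dd := by
    funext σ
    simp only [Function.comp_apply, hβdef, Equiv.symm_apply_apply, hdddef]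
    cases σ <;> simp
  have hUB : Uᴴ * B * U = diagonal (fun i => (β i : ℂ)) := by
    have hB₀sub : B₀ = B'.submatrix ⇑e.symm ⇑e.symm := by
      rw [hB'def, Matrix.submatrix_submatrix]
      rw [show (⇑e ∘ ⇑e.symm) = id from funext fun i => e.apply_symm_apply i]
      simp
    have hdiagsub : diagonal (fun i => (β i : ℂ))
        = (diagonal ((fun i => (β i : ℂ)) ∘ ⇑e)).submatrix ⇑e.symm ⇑e.symm := by
      rw [Matrix.submatrix_diagonal_equiv]
      exact congrArg Matrix.diagonal (funext fun i => by simp)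
    rw [hUdef, Matrix.conjTranspose_mul]
    calc (G.submatrix ⇑e.symm ⇑e.symm)ᴴ * Wᴴ * B * (W * G.submatrix ⇑e.symm ⇑e.symm)
        = (G.submatrix ⇑e.symm ⇑e.symm)ᴴ * B₀ * G.submatrix ⇑e.symm ⇑e.symm := by
          rw [hB₀def]; simp only [Matrix.mul_assoc]
      _ = (Gᴴ * B' * G).submatrix ⇑e.symm ⇑e.symm := by
          rw [hB₀sub, Matrix.conjTranspose_submatrix, Matrix.submatrix_mul_equiv,
            Matrix.submatrix_mul_equiv]
      _ = diagonal (fun i => (β i : ℂ)) := by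
          rw [hGB, ← hβe, hdiagsub]
  -- congruence with the spectral decomposition of B
  set VB : Matrix (Fin n) (Fin n) ℂ := (hB.eigenvectorUnitary : Matrix (Fin n) (Fin n) ℂ)
    with hVBdef
  have hVBspec : VBᴴ * B * VB = diagonal (fun i => (hB.eigenvalues i : ℂ)) := spectral_conj hB
  have hVB1 : VB * VBᴴ = 1 := by
    have h := (Matrix.mem_unitaryGroup_iff).mp hB.eigenvectorUnitary.2
    rw [Matrix.star_eq_conjTranspose] at h
    exact h
  have hBspec : B = VB * diagonal (fun i => (hB.eigenvalues i : ℂ)) * VBᴴ := by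
    calc B = (VB * VBᴴ) * B * (VB * VBᴴ) := by rw [hVB1]; simp
      _ = VB * (VBᴴ * B * VB) * VBᴴ := by simp only [Matrix.mul_assoc]
      _ = VB * diagonal (fun i => (hB.eigenvalues i : ℂ)) * VBᴴ := by rw [hVBspec]
  have hMunit : IsUnit (VBᴴ * U) := by
    have hVBH : IsUnit VBᴴ := (Matrix.isUnit_iff_isUnit_det _).mpr
      (Matrix.isUnit_det_of_right_inverse (B := VB)
        (by rw [← Matrix.star_eq_conjTranspose]
            exact (Matrix.mem_unitaryGroup_iff').mp hB.eigenvectorUnitary.2))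
    exact hVBH.mul hUunit
  have hcong : diagonal (fun i => (β i : ℂ))
      = (VBᴴ * U)ᴴ * diagonal (fun i => (hB.eigenvalues i : ℂ)) * (VBᴴ * U) := by
    rw [Matrix.conjTranspose_mul, Matrix.conjTranspose_conjTranspose]
    calc diagonal (fun i => (β i : ℂ)) = Uᴴ * B * U := hUB.symm
      _ = Uᴴ * (VB * diagonal (fun i => (hB.eigenvalues i : ℂ)) * VBᴴ) * U := by
          rw [← hBspec]
      _ = Uᴴ * VB * diagonal (fun i => (hB.eigenvalues i : ℂ)) * (VBᴴ * U) := by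
          simp only [Matrix.mul_assoc]
  refine ⟨U, ε, β, hUunit, hUA, hUB, ?_, ?_, ?_, ?_, ?_, ?_⟩
  · intro i
    by_cases h : μ i = 0 <;> simp [hεdef, h]
  · intro i
    by_cases h : μ i = 0
    · have hnp : ¬ p i := not_not_intro h
      have hsymm : e.symm i = Sum.inr ⟨i, hnp⟩ := Equiv.sumCompl_symm_apply_of_neg (p := p) (a := i) hnp
      have hβne : β i ≠ 0 := by
        have hb : β i = hB22H.eigenvalues ⟨i, hnp⟩ := by
          rw [hβdef]
          simp [hsymm]
        rw [hb]
        exact heigK _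
      intro hcontra
      exact hβne (congrArg Prod.snd hcontra)
    · have hε : ε i ≠ 0 := by simp [hεdef, h]
      intro hcontra
      exact hε (congrArg Prod.fst hcontra)
  · have hfe : (Finset.univ.filter fun i => ε i = 0)
        = (Finset.univ.filter fun i => μ i = 0) := by
      apply Finset.filter_congr
      intro i _
      by_cases h : μ i = 0 <;> simp [hεdef, h]
    rw [hfe]
    exact hkercard
  · exact card_pos_eq hMunit hcong
  · exact card_neg_eq hMunit hcong
  · exact card_zero_eq hMunit hcong
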